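/- Let S be a division ring, σ an injective ring endomorphism of S, δ a left σ-derivation of S, and f ∈ S[t;σ,δ] monic of degree m. Then every left ideal of the Petit algebra S_f is a principal left ideal generated by some monic right divisor g of f in S[t;σ,δ]. -/

import Mathlib

/-- A presentation of the skew polynomial ring `S[t;σ,δ]`: a ring `R` together with a
ring homomorphism `C : S →+* R`, a distinguished element `X` (playing the role of `t`)
satisfying the twisted commutation rule `X * C a = C (σ a) * X + C (δ a)`, and such that
every element of `R` is in a unique way a finite sum `∑ C aᵢ * X ^ i`. -/
structure SkewPolyRing (S : Type*) [Ring S] (σ : S →+* S) (δ : S → S)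
    (R : Type*) [Ring R] where
  C : S →+* R
  X : R
  X_mul : ∀ a : S, X * C a = C (σ a) * X + C (δ a)
  coeff : R ≃+ (ℕ →₀ S)
  coeff_symm_apply : ∀ p : ℕ →₀ S, coeff.symm p = p.sum fun i a => C a * X ^ i

namespace SkewPolyRing

variable {S : Type*} [Ring S] {σ : S →+* S} {δ : S → S} {R : Type*} [Ring R]

/-- The degree of a skew polynomial, with `deg 0 = ⊥`. -/
noncomputable def deg (P : SkewPolyRing S σ δ R) (x : R) : WithBot ℕ :=
  (P.coeff x).support.max

/-- The leading coefficient of a skew polynomial. -/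
noncomputable def lcoeff (P : SkewPolyRing S σ δ R) (x : R) : S :=
  P.coeff x (WithBot.unbotD 0 (P.deg x))

/-- `f` is monic of degree `m`. -/
def Monic (P : SkewPolyRing S σ δ R) (f : R) (m : ℕ) : Prop :=
  P.deg f = (m : WithBot ℕ) ∧ P.coeff f m = 1

open Classical in
/-- The remainder of right division by `f`. -/
noncomputable def modr (P : SkewPolyRing S σ δ R) (f g : R) : R :=
  if h : ∃ qr : R × R, g = qr.1 * f + qr.2 ∧ P.deg qr.2 < P.deg f then
    (Classical.choose h).2
  else g

/-- The multiplication `x ∘ y = (x * y) mod_r f` of the Petit algebra `S_f`. -/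
noncomputable def pmul (P : SkewPolyRing S σ δ R) (f x y : R) : R :=
  P.modr f (x * y)

/-- The element of `S_f` with coefficient vector `c ∈ S^m`. -/
def ofVec (P : SkewPolyRing S σ δ R) {m : ℕ} (c : Fin m → S) : R :=
  ∑ i : Fin m, P.C (c i) * P.X ^ (i : ℕ)

end SkewPolyRing

/-- `δ` is a left `σ`-derivation of `S`. -/
def IsLeftSigmaDerivation {S : Type*} [Ring S] (σ : S →+* S) (δ : S → S) : Prop :=
  (∀ a b : S, δ (a + b) = δ a + δ b) ∧ ∀ a b : S, δ (a * b) = σ a * δ b + δ a * b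

namespace SkewPolyRing

variable {S : Type*} [Ring S] {σ : S →+* S} {δ : S → S} {R : Type*} [Ring R]

/-- `I` is a left ideal of the Petit algebra `S_f` (whose underlying set is
`{x | deg x < m}` with multiplication `pmul f`). -/
def IsLeftIdeal (P : SkewPolyRing S σ δ R) (f : R) (m : ℕ) (I : Set R) : Prop :=
  (∀ x ∈ I, P.deg x < (m : WithBot ℕ)) ∧ (0 : R) ∈ I ∧
    (∀ x ∈ I, ∀ y ∈ I, x + y ∈ I) ∧ (∀ x ∈ I, -x ∈ I) ∧
    ∀ a : R, P.deg a < (m : WithBot ℕ) → ∀ x ∈ I, P.pmul f a x ∈ I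

/-- The set `S_f ∘ g` of left multiples of `g` in the Petit algebra `S_f`:
the principal left ideal generated by `g`. -/
def leftMulSet (P : SkewPolyRing S σ δ R) (f : R) (m : ℕ) (g : R) : Set R :=
  {x : R | ∃ a : R, P.deg a < (m : WithBot ℕ) ∧ x = P.pmul f a g}

end SkewPolyRing


namespace SkewPolyRing

variable {S : Type*} [Ring S] {σ : S →+* S} {δ : S → S} {R : Type*} [Ring R]
variable (P : SkewPolyRing S σ δ R)

lemma coeff_symm_single (i : ℕ) (a : S) :
    P.coeff.symm (Finsupp.single i a) = P.C a * P.X ^ i := by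
  rw [P.coeff_symm_apply, Finsupp.sum_single_index (by simp)]

lemma coeff_C_mul_X_pow (i : ℕ) (a : S) :
    P.coeff (P.C a * P.X ^ i) = Finsupp.single i a := by
  rw [← coeff_symm_single]; exact P.coeff.apply_symm_apply _

lemma eq_sum_coeff (x : R) :
    x = ∑ i ∈ (P.coeff x).support, P.C (P.coeff x i) * P.X ^ i := by
  conv_lhs => rw [← P.coeff.symm_apply_apply x, P.coeff_symm_apply]
  rfl

lemma deg_eq_bot_iff {x : R} : P.deg x = ⊥ ↔ x = 0 := by
  rw [deg, Finset.max_eq_bot, Finsupp.support_eq_empty]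
  exact ⟨fun h => P.coeff.injective (by simp [h]), fun h => by simp [h]⟩

lemma deg_zero : P.deg (0 : R) = ⊥ := P.deg_eq_bot_iff.2 rfl

lemma coeff_eq_zero_of_deg_lt {x : R} {i : ℕ} (h : P.deg x < (i : WithBot ℕ)) :
    P.coeff x i = 0 := by
  by_contra hc
  exact absurd (Finset.le_max (Finsupp.mem_support_iff.2 hc)) (not_le.2 h)

lemma le_deg {x : R} {i : ℕ} (h : P.coeff x i ≠ 0) : (i : WithBot ℕ) ≤ P.deg x :=
  Finset.le_max (Finsupp.mem_support_iff.2 h)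

lemma deg_lt {x : R} (n : ℕ) (h : ∀ i, n ≤ i → P.coeff x i = 0) :
    P.deg x < (n : WithBot ℕ) := by
  rw [deg, Finset.max_eq_sup_coe]
  refine (Finset.sup_lt_iff (by exact_mod_cast WithBot.bot_lt_coe n)).2 fun i hi => ?_
  have : i < n := lt_of_not_ge fun hn => Finsupp.mem_support_iff.1 hi (h i hn)
  rw [Nat.cast_withBot]; exact WithBot.coe_lt_coe.2 this

lemma deg_le {x : R} (n : ℕ) (h : ∀ i, n < i → P.coeff x i = 0) :
    P.deg x ≤ (n : WithBot ℕ) := by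
  refine Finset.max_le fun i hi => ?_
  have : i ≤ n := le_of_not_gt fun hn => Finsupp.mem_support_iff.1 hi (h i hn)
  rw [Nat.cast_withBot]; exact WithBot.coe_le_coe.2 this

lemma deg_add_le {x y : R} {n : WithBot ℕ} (hx : P.deg x ≤ n) (hy : P.deg y ≤ n) :
    P.deg (x + y) ≤ n := by
  refine Finset.max_le fun i hi => ?_
  rw [Finsupp.mem_support_iff, map_add, Finsupp.add_apply] at hi
  by_cases h : P.coeff x i = 0
  · have : P.coeff y i ≠ 0 := fun hy0 => hi (by rw [h, hy0, add_zero])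
    exact le_trans (P.le_deg this) hy
  · exact le_trans (P.le_deg h) hx

lemma deg_neg (x : R) : P.deg (-x) = P.deg x := by
  unfold deg; rw [map_neg, Finsupp.support_neg]

lemma deg_sum_le {ι : Type*} (s : Finset ι) (g : ι → R) {n : WithBot ℕ}
    (h : ∀ i ∈ s, P.deg (g i) ≤ n) : P.deg (∑ i ∈ s, g i) ≤ n := by
  classical
  induction s using Finset.induction_on with
  | empty => rw [Finset.sum_empty]; exact P.deg_zero ▸ bot_le
  | insert _ _ hx ih =>
    rw [Finset.sum_insert hx]
    exact P.deg_add_le (h _ (Finset.mem_insert_self _ _))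
      (ih fun i hi => h i (Finset.mem_insert_of_mem hi))

lemma deg_C_mul_X_pow_le (a : S) (i : ℕ) : P.deg (P.C a * P.X ^ i) ≤ (i : WithBot ℕ) := by
  refine P.deg_le i fun j hj => ?_
  rw [coeff_C_mul_X_pow]
  exact Finsupp.single_eq_of_ne (by omega)

end SkewPolyRing

namespace SkewPolyRing
variable {S : Type*} [Ring S] {σ : S →+* S} {δ : S → S} {R : Type*} [Ring R]
variable (P : SkewPolyRing S σ δ R)

lemma wb_lt {i n : ℕ} : (i : WithBot ℕ) < (n : WithBot ℕ) ↔ i < n := by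
  rw [Nat.cast_withBot, Nat.cast_withBot]; exact WithBot.coe_lt_coe

lemma wb_le {i n : ℕ} : (i : WithBot ℕ) ≤ (n : WithBot ℕ) ↔ i ≤ n := by
  rw [Nat.cast_withBot, Nat.cast_withBot]; exact WithBot.coe_le_coe

lemma wb_add (i j : ℕ) : ((i + j : ℕ) : WithBot ℕ) = (i : WithBot ℕ) + (j : WithBot ℕ) := by
  push_cast; ring

lemma coeff_C_mul (a : S) (x : R) (i : ℕ) : P.coeff (P.C a * x) i = a * P.coeff x i := by
  conv_lhs => rw [eq_sum_coeff P x]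
  rw [Finset.mul_sum]
  have h1 : ∀ j, P.C a * (P.C (P.coeff x j) * P.X ^ j) = P.C (a * P.coeff x j) * P.X ^ j := by
    intro j; rw [← mul_assoc, ← map_mul]
  simp_rw [h1]
  rw [map_sum, Finsupp.finset_sum_apply]
  simp_rw [coeff_C_mul_X_pow]
  rw [Finset.sum_eq_single i (fun j _ hj => Finsupp.single_eq_of_ne' hj)
    (fun hi => by rw [Finsupp.notMem_support_iff.1 hi, mul_zero, Finsupp.single_zero]; rfl)]
  rw [Finsupp.single_eq_same]

lemma deg_C_mul_le (a : S) (x : R) : P.deg (P.C a * x) ≤ P.deg x := by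
  refine Finset.max_le fun i hi => ?_
  rw [Finsupp.mem_support_iff, coeff_C_mul] at hi
  exact P.le_deg fun h => hi (by rw [h, mul_zero])

lemma mul_X_pow_eq (x : R) (k : ℕ) :
    x * P.X ^ k = ∑ j ∈ (P.coeff x).support, P.C (P.coeff x j) * P.X ^ (j + k) := by
  conv_lhs => rw [eq_sum_coeff P x]
  rw [Finset.sum_mul]
  exact Finset.sum_congr rfl fun j _ => by rw [mul_assoc, ← pow_add]

lemma deg_mul_X_pow_le (x : R) (k : ℕ) : P.deg (x * P.X ^ k) ≤ P.deg x + (k : WithBot ℕ) := by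
  rw [mul_X_pow_eq]
  refine P.deg_sum_le _ _ fun j hj => ?_
  refine le_trans (P.deg_C_mul_X_pow_le _ _) ?_
  rw [wb_add]
  exact add_le_add_left (Finset.le_max hj) _

lemma coeff_mul_X_pow (x : R) (k i : ℕ) : P.coeff (x * P.X ^ k) (i + k) = P.coeff x i := by
  rw [mul_X_pow_eq, map_sum, Finsupp.finset_sum_apply]
  simp_rw [coeff_C_mul_X_pow]
  rw [Finset.sum_eq_single i (fun j _ hj => Finsupp.single_eq_of_ne (by omega))
    (fun hi => by rw [Finsupp.notMem_support_iff.1 hi, Finsupp.single_zero]; rfl)]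
  rw [Finsupp.single_eq_same]

lemma deg_add_lt {x y : R} {n : ℕ} (hx : P.deg x < (n : WithBot ℕ))
    (hy : P.deg y < (n : WithBot ℕ)) : P.deg (x + y) < (n : WithBot ℕ) := by
  refine P.deg_lt n fun i hi => ?_
  have hni : (n : WithBot ℕ) ≤ (i : WithBot ℕ) := wb_le.2 hi
  rw [map_add, Finsupp.add_apply,
    P.coeff_eq_zero_of_deg_lt (lt_of_lt_of_le hx hni),
    P.coeff_eq_zero_of_deg_lt (lt_of_lt_of_le hy hni), add_zero]

lemma X_pow_mul_C (i : ℕ) : ∀ b : S,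
    ∃ r : R, P.X ^ i * P.C b = P.C ((σ ^ i) b) * P.X ^ i + r ∧ P.deg r < (i : WithBot ℕ) := by
  induction i with
  | zero =>
    intro b
    refine ⟨0, by simp, ?_⟩
    rw [P.deg_zero, Nat.cast_withBot]; exact WithBot.bot_lt_coe 0
  | succ i ih =>
    intro b
    obtain ⟨r₁, hr₁, hdr₁⟩ := ih (σ b)
    obtain ⟨r₂, hr₂, hdr₂⟩ := ih (δ b)
    refine ⟨r₁ * P.X + (P.C ((σ ^ i) (δ b)) * P.X ^ i + r₂), ?_, ?_⟩
    · have e1 : P.X ^ (i + 1) * P.C b = P.X ^ i * (P.C (σ b) * P.X + P.C (δ b)) := by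
        rw [pow_succ, mul_assoc, P.X_mul]
      have e2 : (σ ^ i) (σ b) = (σ ^ (i + 1)) b := by
        rw [RingHom.coe_pow, RingHom.coe_pow, Function.iterate_succ_apply]
      rw [e1, mul_add, ← mul_assoc, hr₁, hr₂, add_mul, mul_assoc, ← pow_succ, e2]
      abel
    · have hii : (i : WithBot ℕ) < ((i + 1 : ℕ) : WithBot ℕ) := wb_lt.2 (Nat.lt_succ_self i)
      refine P.deg_add_lt ?_ (P.deg_add_lt (lt_of_le_of_lt (P.deg_C_mul_X_pow_le _ _) hii)
        (lt_trans hdr₂ hii))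
      have h1 : P.deg (r₁ * P.X) ≤ P.deg r₁ + ((1 : ℕ) : WithBot ℕ) := by
        rw [show r₁ * P.X = r₁ * P.X ^ 1 by rw [pow_one]]
        exact P.deg_mul_X_pow_le r₁ 1
      refine lt_of_le_of_lt h1 ?_
      rw [wb_add]
      exact WithBot.add_lt_add_right (by rw [Nat.cast_withBot]; exact WithBot.coe_ne_bot) hdr₁

lemma deg_X_pow_mul_le (i : ℕ) (y : R) :
    P.deg (P.X ^ i * y) ≤ (i : WithBot ℕ) + P.deg y := by
  have hy : P.X ^ i * y = ∑ j ∈ (P.coeff y).support,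
      (P.X ^ i * P.C (P.coeff y j)) * P.X ^ j := by
    conv_lhs => rw [eq_sum_coeff P y]
    rw [Finset.mul_sum]
    exact Finset.sum_congr rfl fun j _ => by rw [← mul_assoc]
  rw [hy]
  refine P.deg_sum_le _ _ fun j hj => ?_
  obtain ⟨r, hr, hdr⟩ := P.X_pow_mul_C i (P.coeff y j)
  rw [hr, add_mul]
  have hj' : (j : WithBot ℕ) ≤ P.deg y := Finset.le_max hj
  refine P.deg_add_le ?_ ?_
  · rw [mul_assoc, ← pow_add]
    refine le_trans (P.deg_C_mul_X_pow_le _ _) ?_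
    rw [wb_add]
    exact add_le_add_right hj' _
  · refine le_trans (P.deg_mul_X_pow_le r j) ?_
    exact le_trans (add_le_add_left (le_of_lt hdr) _) (add_le_add_right hj' _)

lemma deg_mul_le (x y : R) : P.deg (x * y) ≤ P.deg x + P.deg y := by
  conv_lhs => rw [eq_sum_coeff P x]
  rw [Finset.sum_mul]
  refine P.deg_sum_le _ _ fun i hi => ?_
  rw [mul_assoc]
  refine le_trans (P.deg_C_mul_le _ _) (le_trans (P.deg_X_pow_mul_le i y) ?_)
  exact add_le_add_left (Finset.le_max hi) _

end SkewPolyRing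

namespace SkewPolyRing
variable {S : Type*} [Ring S] {σ : S →+* S} {δ : S → S} {R : Type*} [Ring R]
variable (P : SkewPolyRing S σ δ R)

lemma deg_lt_of_le_of_coeff {x : R} {n : ℕ} (h1 : P.deg x ≤ (n : WithBot ℕ))
    (h2 : P.coeff x n = 0) : P.deg x < (n : WithBot ℕ) := by
  refine P.deg_lt n fun i hi => ?_
  rcases eq_or_lt_of_le hi with rfl | hlt
  · exact h2
  · exact P.coeff_eq_zero_of_deg_lt (lt_of_le_of_lt h1 (wb_lt.2 hlt))

lemma exists_decomp {x : R} {n : ℕ} (h : P.deg x ≤ (n : WithBot ℕ)) :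
    ∃ x' : R, x = P.C (P.coeff x n) * P.X ^ n + x' ∧ P.deg x' < (n : WithBot ℕ) := by
  refine ⟨x - P.C (P.coeff x n) * P.X ^ n, by abel, ?_⟩
  refine P.deg_lt n fun i hi => ?_
  rw [map_sub, Finsupp.sub_apply, coeff_C_mul_X_pow]
  rcases eq_or_lt_of_le hi with rfl | hlt
  · rw [Finsupp.single_eq_same, sub_self]
  · rw [P.coeff_eq_zero_of_deg_lt (lt_of_le_of_lt h (wb_lt.2 hlt)),
      Finsupp.single_eq_of_ne (by omega), sub_zero]

lemma coeff_mul_high {x y : R} {d e : ℕ} (hx : P.deg x ≤ (d : WithBot ℕ))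
    (hy : P.deg y ≤ (e : WithBot ℕ)) :
    P.coeff (x * y) (d + e) = P.coeff x d * (σ ^ d) (P.coeff y e) := by
  obtain ⟨x', hx', hdx'⟩ := P.exists_decomp hx
  obtain ⟨y', hy', hdy'⟩ := P.exists_decomp hy
  obtain ⟨r, hr, hdr⟩ := P.X_pow_mul_C d (P.coeff y e)
  set a := P.coeff x d
  set b := P.coeff y e
  have t1 : P.C a * P.X ^ d * (P.C b * P.X ^ e)
      = P.C (a * (σ ^ d) b) * P.X ^ (d + e) + P.C a * (r * P.X ^ e) := by
    rw [mul_assoc, ← mul_assoc (P.X ^ d), hr, add_mul, mul_add,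
      mul_assoc (P.C ((σ ^ d) b)), ← pow_add, ← mul_assoc, ← map_mul]
  have e1 : x * y = (P.C (a * (σ ^ d) b) * P.X ^ (d + e) + P.C a * (r * P.X ^ e))
      + (P.C a * P.X ^ d * y' + x' * y) := by
    conv_lhs => rw [hx', add_mul]
    rw [show P.C a * P.X ^ d * y = P.C a * P.X ^ d * (P.C b * P.X ^ e) + P.C a * P.X ^ d * y' by
      rw [← mul_add, ← hy'], t1]
    abel
  have hde : ((d + e : ℕ) : WithBot ℕ) = (d : WithBot ℕ) + (e : WithBot ℕ) := wb_add d e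
  have c2 : P.deg (P.C a * (r * P.X ^ e)) < ((d + e : ℕ) : WithBot ℕ) := by
    refine lt_of_le_of_lt (le_trans (P.deg_C_mul_le _ _) (P.deg_mul_X_pow_le r e)) ?_
    rw [hde]
    exact WithBot.add_lt_add_right (by rw [Nat.cast_withBot]; exact WithBot.coe_ne_bot) hdr
  have c3 : P.deg (P.C a * P.X ^ d * y') < ((d + e : ℕ) : WithBot ℕ) := by
    refine lt_of_le_of_lt (le_trans (P.deg_mul_le _ _)
      (add_le_add_left (P.deg_C_mul_X_pow_le a d) _)) ?_
    rw [hde]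
    exact WithBot.add_lt_add_left (by rw [Nat.cast_withBot]; exact WithBot.coe_ne_bot) hdy'
  have c4 : P.deg (x' * y) < ((d + e : ℕ) : WithBot ℕ) := by
    refine lt_of_le_of_lt (le_trans (P.deg_mul_le _ _) (add_le_add_right hy _)) ?_
    rw [hde]
    exact WithBot.add_lt_add_right (by rw [Nat.cast_withBot]; exact WithBot.coe_ne_bot) hdx'
  rw [e1]
  simp only [map_add, Finsupp.add_apply]
  rw [coeff_C_mul_X_pow, Finsupp.single_eq_same, P.coeff_eq_zero_of_deg_lt c2,
    P.coeff_eq_zero_of_deg_lt c3, P.coeff_eq_zero_of_deg_lt c4]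
  simp

end SkewPolyRing

namespace SkewPolyRing
variable {S : Type*} [DivisionRing S] {σ : S →+* S} {δ : S → S} {R : Type*} [Ring R]
variable (P : SkewPolyRing S σ δ R)

lemma deg_eq_coe {x : R} (hx : x ≠ 0) :
    P.deg x = ((WithBot.unbotD 0 (P.deg x) : ℕ) : WithBot ℕ) := by
  obtain ⟨k, hk⟩ := WithBot.ne_bot_iff_exists.1
    (show P.deg x ≠ ⊥ from fun h => hx (P.deg_eq_bot_iff.1 h))
  rw [← hk, WithBot.unbotD_coe, Nat.cast_withBot]

lemma lcoeff_ne_zero {x : R} (hx : x ≠ 0) : P.coeff x (WithBot.unbotD 0 (P.deg x)) ≠ 0 := by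
  obtain ⟨k, hk⟩ := WithBot.ne_bot_iff_exists.1
    (show P.deg x ≠ ⊥ from fun h => hx (P.deg_eq_bot_iff.1 h))
  have hk' : WithBot.unbotD 0 (P.deg x) = k := by rw [← hk, WithBot.unbotD_coe]
  rw [hk']
  exact Finsupp.mem_support_iff.1 (Finset.mem_of_max hk.symm)

lemma deg_mul (hσ : Function.Injective σ) {x y : R} (hx : x ≠ 0) (hy : y ≠ 0) :
    P.deg (x * y) = P.deg x + P.deg y := by
  set d := WithBot.unbotD 0 (P.deg x)
  set e := WithBot.unbotD 0 (P.deg y)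
  have hdx := P.deg_eq_coe hx
  have hdy := P.deg_eq_coe hy
  have hc : P.coeff (x * y) (d + e) = P.coeff x d * (σ ^ d) (P.coeff y e) :=
    P.coeff_mul_high (le_of_eq hdx) (le_of_eq hdy)
  have hne : P.coeff (x * y) (d + e) ≠ 0 := by
    rw [hc]
    refine mul_ne_zero (P.lcoeff_ne_zero hx) fun h0 => ?_
    have hinj : Function.Injective (σ ^ d : S →+* S) := by
      rw [RingHom.coe_pow]; exact Function.Injective.iterate hσ d
    exact P.lcoeff_ne_zero hy (hinj (by rw [h0, map_zero]))
  have h1 : P.deg (x * y) ≤ P.deg x + P.deg y := P.deg_mul_le x y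
  have h2 : ((d + e : ℕ) : WithBot ℕ) ≤ P.deg (x * y) := P.le_deg hne
  rw [hdx, hdy, ← wb_add]
  rw [hdx, hdy, ← wb_add] at h1
  exact le_antisymm h1 h2

lemma div_exists (hσ : Function.Injective σ) {g : R} (hg : g ≠ 0) (x : R) :
    ∃ q r : R, x = q * g + r ∧ P.deg r < P.deg g := by
  have hgbot : (⊥ : WithBot ℕ) < P.deg g :=
    Ne.bot_lt fun h => hg (P.deg_eq_bot_iff.1 h)
  have key : ∀ n : ℕ, ∀ x : R, P.deg x < (n : WithBot ℕ) →
      ∃ q r : R, x = q * g + r ∧ P.deg r < P.deg g := by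
    intro n
    induction n with
    | zero =>
      intro x hx
      have hx0 : x = 0 := by
        refine P.deg_eq_bot_iff.1 ?_
        by_contra h
        obtain ⟨k, hk⟩ := WithBot.ne_bot_iff_exists.1 h
        rw [← Nat.cast_withBot] at hk
        rw [← hk] at hx
        exact absurd (wb_lt.1 hx) (Nat.not_lt_zero k)
      exact ⟨0, 0, by rw [hx0]; simp, by rw [P.deg_zero]; exact hgbot⟩
    | succ n ih =>
      intro x hx
      by_cases hlt : P.deg x < P.deg g
      · exact ⟨0, x, by simp, hlt⟩
      push_neg at hlt
      have hx0 : x ≠ 0 := by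
        intro h; rw [h, P.deg_zero, le_bot_iff] at hlt
        exact hg (P.deg_eq_bot_iff.1 hlt)
      set d := WithBot.unbotD 0 (P.deg x) with hd
      set e := WithBot.unbotD 0 (P.deg g) with he
      have hdx := P.deg_eq_coe hx0
      have hdg := P.deg_eq_coe hg
      have hed : e ≤ d := by
        rw [hdx, hdg] at hlt; exact wb_le.1 hlt
      have hlcg : P.coeff g e ≠ 0 := P.lcoeff_ne_zero hg
      have hσe : ((σ ^ (d - e)) (P.coeff g e)) ≠ 0 := by
        intro h0
        have hinj : Function.Injective (σ ^ (d - e) : S →+* S) := by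
          rw [RingHom.coe_pow]; exact Function.Injective.iterate hσ _
        exact hlcg (hinj (by rw [h0, map_zero]))
      set c := P.coeff x d * ((σ ^ (d - e)) (P.coeff g e))⁻¹ with hc
      set M := P.C c * P.X ^ (d - e) with hM
      have hdegMg : P.deg (M * g) ≤ (d : WithBot ℕ) := by
        refine le_trans (P.deg_mul_le _ _) ?_
        rw [hdg]
        refine le_trans (add_le_add_left (P.deg_C_mul_X_pow_le _ _) _) ?_
        rw [← wb_add, wb_le]
        omega
      have hcoeffMg : P.coeff (M * g) d = P.coeff x d := by
        have h1 : P.deg M ≤ ((d - e : ℕ) : WithBot ℕ) := P.deg_C_mul_X_pow_le _ _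
        have h2 := P.coeff_mul_high h1 (le_of_eq hdg)
        rw [Nat.sub_add_cancel hed] at h2
        rw [h2, hM, coeff_C_mul_X_pow, Finsupp.single_eq_same, hc, mul_assoc,
          inv_mul_cancel₀ hσe, mul_one]
      have hx1lt : P.deg (x - M * g) < (d : WithBot ℕ) := by
        refine P.deg_lt_of_le_of_coeff ?_ ?_
        · rw [sub_eq_add_neg]
          exact P.deg_add_le (le_of_eq hdx) (le_trans (le_of_eq (P.deg_neg _)) hdegMg)
        · rw [map_sub, Finsupp.sub_apply, hcoeffMg, sub_self]
      have hdn : d < n + 1 := wb_lt.1 (hdx ▸ hx)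
      have hx1n : P.deg (x - M * g) < (n : WithBot ℕ) :=
        lt_of_lt_of_le hx1lt (wb_le.2 (by omega))
      obtain ⟨q₁, r, hqr, hr⟩ := ih (x - M * g) hx1n
      refine ⟨q₁ + M, r, ?_, hr⟩
      have hsplit : x = (x - M * g) + M * g := by abel
      rw [add_mul, hsplit, hqr]
      abel
  obtain ⟨n, hn⟩ : ∃ n : ℕ, P.deg x < (n : WithBot ℕ) := by
    by_cases h : x = 0
    · exact ⟨1, by rw [h, P.deg_zero, Nat.cast_withBot]; exact WithBot.bot_lt_coe 1⟩
    · refine ⟨WithBot.unbotD 0 (P.deg x) + 1, ?_⟩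
      conv_lhs => rw [P.deg_eq_coe h]
      exact wb_lt.2 (Nat.lt_succ_self _)
  exact key n x hn

lemma div_unique (hσ : Function.Injective σ) {g q₁ r₁ q₂ r₂ : R} (hg : g ≠ 0)
    (h : q₁ * g + r₁ = q₂ * g + r₂) (h₁ : P.deg r₁ < P.deg g) (h₂ : P.deg r₂ < P.deg g) :
    q₁ = q₂ ∧ r₁ = r₂ := by
  have key : (q₁ - q₂) * g = r₂ - r₁ := by
    rw [sub_mul, sub_eq_sub_iff_add_eq_add, h, add_comm]
  have hq : q₁ = q₂ := by
    by_contra hne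
    have h0 : q₁ - q₂ ≠ 0 := sub_ne_zero.2 hne
    have hdeq := P.deg_mul hσ h0 hg
    have hge : P.deg g ≤ P.deg ((q₁ - q₂) * g) := by
      rw [hdeq, P.deg_eq_coe h0]
      refine le_add_of_nonneg_left ?_
      rw [show (0 : WithBot ℕ) = ((0 : ℕ) : WithBot ℕ) by rw [Nat.cast_zero], wb_le]
      exact Nat.zero_le _
    have hlt : P.deg ((q₁ - q₂) * g) < P.deg g := by
      rw [key, sub_eq_add_neg]
      exact lt_of_le_of_lt (P.deg_add_le (le_max_left _ _)
        (le_trans (le_of_eq (P.deg_neg r₁)) (le_max_right (P.deg r₂) (P.deg r₁))))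
        (max_lt h₂ h₁)
    exact absurd (lt_of_le_of_lt hge hlt) (lt_irrefl _)
  refine ⟨hq, ?_⟩
  rw [hq] at h
  exact add_left_cancel h

lemma modr_eq' (hσ : Function.Injective σ) {f x q r : R} (hf : f ≠ 0) (h : x = q * f + r)
    (hr : P.deg r < P.deg f) : P.modr f x = r := by
  have hex : ∃ qr : R × R, x = qr.1 * f + qr.2 ∧ P.deg qr.2 < P.deg f := ⟨(q, r), h, hr⟩
  rw [modr, dif_pos hex]
  have spec := Classical.choose_spec hex
  exact (P.div_unique hσ hf (spec.1.symm.trans h) spec.2 hr).2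

end SkewPolyRing

/-- over a division ring every left ideal of `S_f` is principal,
generated by a monic right divisor of `f`. -/
theorem petit_left_ideal_principal_of_divisionRing {S R : Type*} [DivisionRing S] [Ring R]
    (σ : S →+* S) (hσ : Function.Injective σ)
    (δ : S → S) (hδ : IsLeftSigmaDerivation σ δ)
    (P : SkewPolyRing S σ δ R) (f : R) (m : ℕ) (hf : P.Monic f m)
    (I : Set R) (hI : P.IsLeftIdeal f m I) :
    ∃ g q : R, f = q * g ∧ P.lcoeff g = 1 ∧ I = P.leftMulSet f m g := by
  classical
  obtain ⟨hdegf, hcf⟩ := hf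
  have hfbot : P.deg f ≠ ⊥ := by
    rw [hdegf, Nat.cast_withBot]; exact WithBot.coe_ne_bot
  have hf0 : f ≠ 0 := fun h => hfbot (by rw [h, P.deg_zero])
  obtain ⟨hIdeg, hI0, hIadd, hIneg, hImul⟩ := hI
  have hlcf : P.lcoeff f = 1 := by
    rw [SkewPolyRing.lcoeff, hdegf, Nat.cast_withBot, WithBot.unbotD_coe, hcf]
  by_cases hItriv : ∀ x ∈ I, x = 0
  · refine ⟨f, 1, (one_mul f).symm, hlcf, ?_⟩
    ext x
    simp only [SkewPolyRing.leftMulSet, Set.mem_setOf_eq]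
    constructor
    · intro hx
      refine ⟨0, ?_, ?_⟩
      · rw [P.deg_zero, Nat.cast_withBot]; exact WithBot.bot_lt_coe m
      · rw [hItriv x hx, SkewPolyRing.pmul, zero_mul]
        exact (P.modr_eq' hσ hf0 (show (0:R) = 0 * f + 0 by simp)
          (by rw [P.deg_zero]; exact Ne.bot_lt hfbot)).symm
    · rintro ⟨a, ha, rfl⟩
      have h0 : P.pmul f a f = 0 := by
        rw [SkewPolyRing.pmul]
        exact P.modr_eq' hσ hf0 (show a * f = a * f + 0 by simp)
          (by rw [P.deg_zero]; exact Ne.bot_lt hfbot)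
      rw [h0]; exact hI0
  · push_neg at hItriv
    obtain ⟨x₀, hx₀I, hx₀⟩ := hItriv
    have hex : ∃ n : ℕ, ∃ x, x ∈ I ∧ x ≠ 0 ∧ P.deg x = (n : WithBot ℕ) :=
      ⟨WithBot.unbotD 0 (P.deg x₀), x₀, hx₀I, hx₀, P.deg_eq_coe hx₀⟩
    set d := Nat.find hex with hdd
    obtain ⟨g₀, hg₀I, hg₀0, hg₀d⟩ := Nat.find_spec hex
    have hmin : ∀ x ∈ I, x ≠ 0 → (d : WithBot ℕ) ≤ P.deg x := by
      intro x hx hx0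
      have h1 : d ≤ WithBot.unbotD 0 (P.deg x) := Nat.find_min' hex ⟨x, hx, hx0, P.deg_eq_coe hx0⟩
      rw [P.deg_eq_coe hx0]
      exact SkewPolyRing.wb_le.2 h1
    have hmin' : ∀ x ∈ I, P.deg x < (d : WithBot ℕ) → x = 0 := by
      intro x hx hlt
      by_contra h0
      exact absurd (lt_of_le_of_lt (hmin x hx h0) hlt) (lt_irrefl _)
    have hdm : d < m := SkewPolyRing.wb_lt.1 (hg₀d ▸ hIdeg g₀ hg₀I)
    have h0m : 0 < m := Nat.lt_of_le_of_lt (Nat.zero_le d) hdm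
    have hcg₀ : P.coeff g₀ d ≠ 0 := by
      have h1 := P.lcoeff_ne_zero hg₀0
      have hud : WithBot.unbotD 0 (P.deg g₀) = d := by rw [hg₀d, Nat.cast_withBot, WithBot.unbotD_coe]
      rwa [hud] at h1
    set cc := (P.coeff g₀ d)⁻¹ with hcc
    set g := P.C cc * g₀ with hg
    have hcgd : P.coeff g d = 1 := by rw [hg, SkewPolyRing.coeff_C_mul, hcc, inv_mul_cancel₀ hcg₀]
    have hg0 : g ≠ 0 := by
      intro h
      rw [h, map_zero] at hcgd
      simp at hcgd
    have hdegg : P.deg g = (d : WithBot ℕ) := by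
      refine le_antisymm (le_trans (P.deg_C_mul_le _ _) (le_of_eq hg₀d)) (P.le_deg ?_)
      rw [hcgd]; exact one_ne_zero
    have hlcg : P.lcoeff g = 1 := by
      rw [SkewPolyRing.lcoeff, hdegg, Nat.cast_withBot, WithBot.unbotD_coe, hcgd]
    have hgI : g ∈ I := by
      have hCc : P.deg (P.C cc) < (m : WithBot ℕ) := by
        have h1 : P.deg (P.C cc) ≤ ((0 : ℕ) : WithBot ℕ) := by
          rw [show P.C cc = P.C cc * P.X ^ 0 by rw [pow_zero, mul_one]]
          exact P.deg_C_mul_X_pow_le _ _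
        exact lt_of_le_of_lt h1 (SkewPolyRing.wb_lt.2 h0m)
      have hpg : P.pmul f (P.C cc) g₀ = g := by
        rw [SkewPolyRing.pmul, ← hg]
        exact P.modr_eq' hσ hf0 (show g = 0 * f + g by simp)
          (by rw [hdegg, hdegf]; exact SkewPolyRing.wb_lt.2 hdm)
      exact hpg ▸ hImul (P.C cc) hCc g₀ hg₀I
    have hdegg_f : P.deg g < P.deg f := by rw [hdegg, hdegf]; exact SkewPolyRing.wb_lt.2 hdm
    have hIeq : I = P.leftMulSet f m g := by
      ext x
      simp only [SkewPolyRing.leftMulSet, Set.mem_setOf_eq]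
      constructor
      · intro hx
        obtain ⟨q, r, hqr, hr⟩ := P.div_exists hσ hg0 x
        by_cases hq0 : q = 0
        · have hxr : x = r := by rw [hqr, hq0, zero_mul, zero_add]
          have hx0' : x = 0 := hmin' x hx (by rw [← hdegg, hxr]; exact hr)
          refine ⟨0, ?_, ?_⟩
          · rw [P.deg_zero, Nat.cast_withBot]; exact WithBot.bot_lt_coe m
          · rw [hx0', SkewPolyRing.pmul, zero_mul]
            exact (P.modr_eq' hσ hf0 (show (0:R) = 0 * f + 0 by simp)
              (by rw [P.deg_zero]; exact Ne.bot_lt hfbot)).symm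
        · have hrm : P.deg r < (m : WithBot ℕ) := by
            rw [← hdegf]
            exact lt_trans hr hdegg_f
          have hdq : P.deg q + (d : WithBot ℕ) < (m : WithBot ℕ) := by
            have h1 : P.deg (q * g) = P.deg q + (d : WithBot ℕ) := by
              rw [P.deg_mul hσ hq0 hg0, hdegg]
            have h2 : P.deg (q * g) < (m : WithBot ℕ) := by
              have h3 : q * g = x + -r := by rw [hqr]; abel
              rw [h3]
              exact lt_of_le_of_lt (P.deg_add_le (le_max_left _ _)
                (le_trans (le_of_eq (P.deg_neg r)) (le_max_right (P.deg x) (P.deg r))))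
                (max_lt (hIdeg x hx) hrm)
            rw [← h1]; exact h2
          have hdqm : P.deg q < (m : WithBot ℕ) := by
            refine lt_of_le_of_lt ?_ hdq
            refine le_add_of_nonneg_right ?_
            rw [show (0 : WithBot ℕ) = ((0 : ℕ) : WithBot ℕ) from (Nat.cast_zero).symm, SkewPolyRing.wb_le]
            exact Nat.zero_le d
          have hpq : P.pmul f q g = q * g := by
            rw [SkewPolyRing.pmul]
            refine P.modr_eq' hσ hf0 (show q * g = 0 * f + q * g by simp) ?_
            rw [P.deg_mul hσ hq0 hg0, hdegg, hdegf]
            exact hdq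
          have hqgI : q * g ∈ I := hpq ▸ hImul q hdqm g hgI
          have hrI : r ∈ I := by
            have h4 : r = x + -(q * g) := by rw [hqr]; abel
            rw [h4]
            exact hIadd x hx _ (hIneg _ hqgI)
          have hr0 : r = 0 := hmin' r hrI (by rw [← hdegg]; exact hr)
          refine ⟨q, hdqm, ?_⟩
          rw [hpq, hqr, hr0, add_zero]
      · rintro ⟨a, ha, rfl⟩
        exact hImul a ha g hgI
    by_cases hd0 : d = 0
    · have hg1 : g = 1 := by
        apply P.coeff.injective
        have h1 : P.coeff (1 : R) = Finsupp.single 0 1 := by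
          rw [show (1 : R) = P.C 1 * P.X ^ 0 by simp, SkewPolyRing.coeff_C_mul_X_pow]
        rw [h1]
        ext i
        rcases Nat.eq_zero_or_pos i with rfl | hi
        · rw [Finsupp.single_eq_same, ← hd0, hcgd]
        · rw [P.coeff_eq_zero_of_deg_lt (by rw [hdegg, hd0]; exact SkewPolyRing.wb_lt.2 hi),
            Finsupp.single_eq_of_ne (by omega)]
      exact ⟨g, f, by rw [hg1, mul_one], hlcg, hIeq⟩
    · obtain ⟨qf, rf, hqrf, hrf⟩ := P.div_exists hσ hg0 f
      have hqf0 : qf ≠ 0 := by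
        intro h
        rw [h, zero_mul, zero_add] at hqrf
        rw [← hqrf] at hrf
        exact absurd (lt_trans hrf hdegg_f) (lt_irrefl _)
      have hdqf : P.deg (qf * g) ≤ (m : WithBot ℕ) := by
        have h3 : qf * g = f + -rf := by rw [hqrf]; abel
        rw [h3]
        refine P.deg_add_le (le_of_eq hdegf) ?_
        rw [P.deg_neg]
        rw [← hdegf]
        exact le_of_lt (lt_trans hrf hdegg_f)
      set k := WithBot.unbotD 0 (P.deg qf) with hk
      have hkd : ((k + d : ℕ) : WithBot ℕ) ≤ (m : WithBot ℕ) := by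
        have h5 := P.deg_mul hσ hqf0 hg0
        rw [P.deg_eq_coe hqf0, hdegg, ← SkewPolyRing.wb_add] at h5
        rw [← h5]
        exact hdqf
      have hkm : k + d ≤ m := SkewPolyRing.wb_le.1 hkd
      have hqfm : P.deg qf < (m : WithBot ℕ) := by
        rw [P.deg_eq_coe hqf0]
        exact SkewPolyRing.wb_lt.2 (by omega)
      have hpqf : P.pmul f qf g = -rf := by
        rw [SkewPolyRing.pmul]
        refine P.modr_eq' hσ hf0 (show qf * g = 1 * f + -rf by rw [one_mul, hqrf]; abel) ?_
        rw [P.deg_neg]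
        exact lt_trans hrf hdegg_f
      have hrfI : rf ∈ I := by
        have h1 : -rf ∈ I := hpqf ▸ hImul qf hqfm g hgI
        rw [show rf = -(-rf) from (neg_neg rf).symm]
        exact hIneg _ h1
      have hrf0 : rf = 0 := hmin' rf hrfI (by rw [← hdegg]; exact hrf)
      exact ⟨g, qf, by rw [hqrf, hrf0, add_zero], hlcg, hIeq⟩
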